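/- If three points x, y, z on the round unit 2-sphere satisfy d(x,y) + d(y,z) + d(z,x) = 2π for the intrinsic geodesic distance (equivalently, distances summing to π on the sphere of radius 1/2 after rescaling), then x, y, z lie on a common great circle. -/

import Mathlib

set_option maxHeartbeats 1000000

open Module Submodule Real

lemma step_lemma {V : Type*} [AddCommGroup V] [Module ℝ V] [FiniteDimensional ℝ V]
    (N : Submodule ℝ V) (h : finrank ℝ N < finrank ℝ V) :
    ∃ N' : Submodule ℝ V, N ≤ N' ∧ finrank ℝ N' = finrank ℝ N + 1 := by
  obtain ⟨m, hm⟩ := N.exists_of_finrank_lt h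
  have hmN : m ∉ N := by simpa using hm 1 one_ne_zero
  have hm0 : m ≠ 0 := fun h0 => hmN (h0 ▸ N.zero_mem)
  refine ⟨N ⊔ (ℝ ∙ m), le_sup_left, ?_⟩
  have hle : finrank ℝ (N ⊔ (ℝ ∙ m) : Submodule ℝ V) ≤ finrank ℝ N + 1 := by
    have := Submodule.finrank_add_le_finrank_add_finrank N (ℝ ∙ m)
    rwa [finrank_span_singleton hm0] at this
  have hlt : finrank ℝ N < finrank ℝ (N ⊔ (ℝ ∙ m) : Submodule ℝ V) := by
    apply Submodule.finrank_lt_finrank_of_lt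
    refine lt_of_le_of_ne le_sup_left (fun he => hmN ?_)
    rw [he]; exact mem_sup_right (mem_span_singleton_self m)
  omega

lemma extend_lemma {V : Type*} [AddCommGroup V] [Module ℝ V] [FiniteDimensional ℝ V] :
    ∀ (d : ℕ) (N : Submodule ℝ V), finrank ℝ N + d ≤ finrank ℝ V →
      ∃ P : Submodule ℝ V, N ≤ P ∧ finrank ℝ P = finrank ℝ N + d := by
  intro d
  induction d with
  | zero => exact fun N _ => ⟨N, le_rfl, by omega⟩
  | succ d ih =>
    intro N hN
    obtain ⟨N', hNN', hN'⟩ := step_lemma N (by omega)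
    obtain ⟨P, hP1, hP2⟩ := ih N' (by omega)
    exact ⟨P, le_trans hNN' hP1, by omega⟩

lemma extend_two {V : Type*} [AddCommGroup V] [Module ℝ V] [FiniteDimensional ℝ V]
    (h3 : finrank ℝ V = 3) (N : Submodule ℝ V) (hN : finrank ℝ N ≤ 2) :
    ∃ P : Submodule ℝ V, N ≤ P ∧ finrank ℝ P = 2 := by
  obtain ⟨P, h1, h2⟩ := extend_lemma (2 - finrank ℝ N) N (by omega)
  exact ⟨P, h1, by omega⟩

lemma finrank_span_singleton_le' {V : Type*} [AddCommGroup V] [Module ℝ V]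
    (a : V) : finrank ℝ (span ℝ ({a} : Set V)) ≤ 1 := by
  by_cases ha : a = 0
  · rw [ha, Submodule.span_zero_singleton]; simp
  · rw [finrank_span_singleton ha]

lemma finrank_span_pair_le {V : Type*} [AddCommGroup V] [Module ℝ V]
    (a b : V) : finrank ℝ (span ℝ ({a, b} : Set V)) ≤ 2 := by
  have h : span ℝ ({a, b} : Set V) = span ℝ {a} ⊔ span ℝ {b} := by
    rw [show ({a, b} : Set V) = {a} ∪ {b} by rfl, Submodule.span_union]
  rw [h]
  calc finrank ℝ (span ℝ {a} ⊔ span ℝ {b} : Submodule ℝ V)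
      ≤ finrank ℝ (span ℝ ({a} : Set V)) + finrank ℝ (span ℝ ({b} : Set V)) :=
        Submodule.finrank_add_le_finrank_add_finrank _ _
    _ ≤ 2 := by
        have := finrank_span_singleton_le' a
        have := finrank_span_singleton_le' b
        omega

lemma inner_comb_expand (x y z : EuclideanSpace ℝ (Fin 3)) (a b c : ℝ) :
    (inner ℝ (a • x - b • y + c • z) (a • x - b • y + c • z) : ℝ) =
      a ^ 2 * (inner ℝ x x : ℝ) + b ^ 2 * (inner ℝ y y : ℝ) + c ^ 2 * (inner ℝ z z : ℝ)
      - 2 * a * b * (inner ℝ x y : ℝ) - 2 * b * c * (inner ℝ y z : ℝ)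
      + 2 * a * c * (inner ℝ x z : ℝ) := by
  simp only [inner_add_left, inner_add_right, inner_sub_left, inner_sub_right,
    real_inner_smul_left, real_inner_smul_right, real_inner_comm x y,
    real_inner_comm y z, real_inner_comm x z]
  ring

/-- Intrinsic (geodesic) distance on the round unit 2-sphere in `ℝ³`:
`d(x,y) = arccos ⟪x,y⟫` for unit vectors `x, y`. -/
noncomputable def unitSphereDist (x y : EuclideanSpace ℝ (Fin 3)) : ℝ :=
  Real.arccos (inner ℝ x y : ℝ)

/-- If three points on the round unit 2-sphere have pairwise intrinsic distances summing
to `2π`, then they lie on a common great circle, i.e. in a common 2-dimensional linear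
subspace of `ℝ³`. -/
theorem greatCircle_of_sum_dist_eq_two_pi (x y z : EuclideanSpace ℝ (Fin 3))
    (hx : ‖x‖ = 1) (hy : ‖y‖ = 1) (hz : ‖z‖ = 1)
    (hsum : unitSphereDist x y + unitSphereDist y z + unitSphereDist z x = 2 * Real.pi) :
    ∃ P : Submodule ℝ (EuclideanSpace ℝ (Fin 3)),
      Module.finrank ℝ P = 2 ∧ x ∈ P ∧ y ∈ P ∧ z ∈ P := by
  have hdim : finrank ℝ (EuclideanSpace ℝ (Fin 3)) = 3 := by simp
  set α : ℝ := inner ℝ x y with hα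
  set β : ℝ := inner ℝ y z with hβ
  set γ : ℝ := inner ℝ z x with hγdef
  have habsα : |α| ≤ 1 := by
    simpa [hx, hy] using abs_real_inner_le_norm x y
  have habsβ : |β| ≤ 1 := by
    simpa [hy, hz] using abs_real_inner_le_norm y z
  have habsγ : |γ| ≤ 1 := by
    simpa [hz, hx] using abs_real_inner_le_norm z x
  have hα1 : -1 ≤ α := neg_le_of_abs_le habsα
  have hα2 : α ≤ 1 := le_of_abs_le habsα
  have hβ1 : -1 ≤ β := neg_le_of_abs_le habsβ
  have hβ2 : β ≤ 1 := le_of_abs_le habsβ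
  have harc : Real.arccos γ = 2 * Real.pi - (Real.arccos α + Real.arccos β) := by
    simp only [unitSphereDist] at hsum
    linarith [hsum]
  have hγ : γ = α * β - Real.sqrt (1 - α ^ 2) * Real.sqrt (1 - β ^ 2) := by
    have h0 : γ = Real.cos (Real.arccos γ) :=
      (Real.cos_arccos (neg_le_of_abs_le habsγ) (le_of_abs_le habsγ)).symm
    rw [harc, show 2 * Real.pi - (Real.arccos α + Real.arccos β) =
        -(Real.arccos α + Real.arccos β) + 2 * Real.pi by ring,
      Real.cos_add_two_pi, Real.cos_neg, Real.cos_add, Real.cos_arccos hα1 hα2,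
      Real.cos_arccos hβ1 hβ2, Real.sin_arccos, Real.sin_arccos] at h0
    exact h0
  set s1 : ℝ := Real.sqrt (1 - α ^ 2) with hs1
  set s2 : ℝ := Real.sqrt (1 - β ^ 2) with hs2
  have hs1sq : s1 ^ 2 = 1 - α ^ 2 := Real.sq_sqrt (by nlinarith)
  have hs2sq : s2 ^ 2 = 1 - β ^ 2 := Real.sq_sqrt (by nlinarith)
  have hnx : (inner ℝ x x : ℝ) = 1 := by
    rw [real_inner_self_eq_norm_sq, hx]; norm_num
  have hny : (inner ℝ y y : ℝ) = 1 := by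
    rw [real_inner_self_eq_norm_sq, hy]; norm_num
  have hnz : (inner ℝ z z : ℝ) = 1 := by
    rw [real_inner_self_eq_norm_sq, hz]; norm_num
  have hyx : (inner ℝ y x : ℝ) = α := by rw [real_inner_comm]
  have hzy : (inner ℝ z y : ℝ) = β := by rw [real_inner_comm]
  have hxz : (inner ℝ x z : ℝ) = γ := by rw [real_inner_comm]
  by_cases hdeg : s1 = 0
  · -- degenerate: α = ±1, so y = α • x; use span {x, z}
    have hα21 : α ^ 2 = 1 := by
      have h := hs1sq; rw [hdeg] at h; nlinarith
    have hyeq : y = α • x := by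
      have hsub : (inner ℝ (y - α • x) (y - α • x) : ℝ) = 0 := by
        simp only [inner_sub_left, inner_sub_right, real_inner_smul_left,
          real_inner_smul_right, hnx, hny, hyx, ← hα]
        nlinarith [hα21]
      exact sub_eq_zero.mp (inner_self_eq_zero.mp hsub)
    obtain ⟨P, hNP, hP⟩ := extend_two hdim (span ℝ ({x, z} : Set _))
      (finrank_span_pair_le x z)
    have hxP : x ∈ P := hNP (subset_span (by simp))
    have hzP : z ∈ P := hNP (subset_span (by simp))
    exact ⟨P, hP, hxP, hyeq ▸ P.smul_mem α hxP, hzP⟩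
  · -- nondegenerate: z ∈ span {x, y}
    set c2 : ℝ := s1 * β + s2 * α with hc2
    set w : EuclideanSpace ℝ (Fin 3) := s2 • x - c2 • y + s1 • z with hw
    have hww : (inner ℝ w w : ℝ) =
        s2 ^ 2 + c2 ^ 2 + s1 ^ 2 - 2 * s2 * c2 * α - 2 * c2 * s1 * β
          + 2 * s2 * s1 * γ := by
      rw [hw, inner_comb_expand, hnx, hny, hnz, hxz, ← hα, ← hβ]
      ring
    have hww0 : (inner ℝ w w : ℝ) = 0 := by
      rw [hww, hc2]
      linear_combination (2 * s1 * s2) * hγ + (1 - β ^ 2 - 2 * s2 ^ 2) * hs1sq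
        - (1 - α ^ 2) * hs2sq
    have hw0 : w = 0 := inner_self_eq_zero.mp hww0
    have hzmem : z ∈ span ℝ ({x, y} : Set (EuclideanSpace ℝ (Fin 3))) := by
      have hz' : z = s1⁻¹ • (c2 • y - s2 • x) := by
        have h1 : s1 • z = c2 • y - s2 • x := by
          have := hw0
          rw [hw] at this
          abel_nf at this ⊢
          linear_combination (norm := module) this
        rw [← h1, smul_smul, inv_mul_cancel₀ hdeg, one_smul]
      rw [hz']
      exact smul_mem _ _ (sub_mem (smul_mem _ _ (subset_span (by simp)))
        (smul_mem _ _ (subset_span (by simp))))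
    obtain ⟨P, hNP, hP⟩ := extend_two hdim (span ℝ ({x, y} : Set _))
      (finrank_span_pair_le x y)
    exact ⟨P, hP, hNP (subset_span (by simp)), hNP (subset_span (by simp)), hNP hzmem⟩
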